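/- Let I, K be ideals on a set S and let I ∨ K = {A ∪ B : A ∈ I, B ∈ K}. For any function f : S → P into a PM space and any p ∈ P, f is strong-I^K-convergent to p if and only if f is strong-(I ∨ K)^K-convergent to p. -/
import Mathlib


open Set
open scoped Classical

/-- A probabilistic metric space, encoded via the family of distance
distribution functions `F a b : ℝ → ℝ`, with the axioms needed for the
strong topology: `F a a = ε₀`, separation of distinct points, symmetry,
and the consequence of continuity of the triangle function `τ`. -/
structure PMSpace (P : Type*) where
  F : P → P → ℝ → ℝ
  self_one : ∀ a : P, ∀ t : ℝ, 0 < t → F a a t = 1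
  ne_sep : ∀ a b : P, a ≠ b → ∃ t : ℝ, 0 < t ∧ F a b t ≤ 1 - t
  symm : ∀ a b : P, ∀ t : ℝ, F a b t = F b a t
  triangle : ∀ t : ℝ, 0 < t → ∃ η : ℝ, 0 < η ∧
    ∀ a b c : P, 1 - η < F a b η → 1 - η < F b c η → 1 - t < F a c t

/-- The strong `t`-neighborhood `N_p(t) = {q : F_{pq}(t) > 1 - t}`. -/
def PMSpace.Nbhd {P : Type*} (M : PMSpace P) (p : P) (t : ℝ) : Set P :=
  {q | 1 - t < M.F p q t}

/-- An ideal of subsets of `S`. -/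
def IsIdeal {S : Type*} (I : Set (Set S)) : Prop :=
  ∅ ∈ I ∧ (∀ A ∈ I, ∀ B, B ⊆ A → B ∈ I) ∧ (∀ A ∈ I, ∀ B ∈ I, A ∪ B ∈ I)

/-- An admissible ideal: contains all singletons and is nontrivial. -/
def IsAdmissibleIdeal {S : Type*} (I : Set (Set S)) : Prop :=
  IsIdeal I ∧ (∀ s : S, {s} ∈ I) ∧ Set.univ ∉ I

/-- The ideal `I ∨ K = {A ∪ B : A ∈ I, B ∈ K}`. -/
def IdealJoin {S : Type*} (I K : Set (Set S)) : Set (Set S) :=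
  {C | ∃ A ∈ I, ∃ B ∈ K, C = A ∪ B}

/-- The trace ideal `K|_A = {C ∩ A : C ∈ K}`. -/
def TraceIdeal {S : Type*} (K : Set (Set S)) (A : Set S) : Set (Set S) :=
  {B | ∃ C ∈ K, B = C ∩ A}

/-- `f` is strong-`K`-convergent to `p`. -/
def StrongConv {S P : Type*} (M : PMSpace P) (K : Set (Set S)) (f : S → P) (p : P) : Prop :=
  ∀ t : ℝ, 0 < t → {s | f s ∉ M.Nbhd p t} ∈ K

/-- `f` is strong-`I^K`-convergent to `p`: there is `A` with `Aᶜ ∈ I`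
(i.e. `A ∈ F(I)`) such that the modification of `f`, equal to `p` off `A`,
is strong-`K`-convergent to `p`. -/
def StrongIKConv {S P : Type*} (M : PMSpace P) (I K : Set (Set S)) (f : S → P) (p : P) : Prop :=
  ∃ A : Set S, Aᶜ ∈ I ∧ StrongConv M K (fun s => if s ∈ A then f s else p) p

/-- `f` is strong-`I`-Cauchy. -/
def StrongCauchy {S P : Type*} (M : PMSpace P) (I : Set (Set S)) (f : S → P) : Prop :=
  ∀ t : ℝ, 0 < t → ∃ m : S, {s | f s ∉ M.Nbhd (f m) t} ∈ I

/-- `f` is strong-`I^K`-Cauchy: there is `A ∈ F(I)` such that `f|_A` is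
strong-`K|_A`-Cauchy. -/
def StrongIKCauchy {S P : Type*} (M : PMSpace P) (I K : Set (Set S)) (f : S → P) : Prop :=
  ∃ A : Set S, Aᶜ ∈ I ∧ ∀ t : ℝ, 0 < t → ∃ m ∈ A,
    {s ∈ A | f s ∉ M.Nbhd (f m) t} ∈ TraceIdeal K A

/-- The strong topology on a PM space, generated by strong neighborhoods. -/
def strongTopology {P : Type*} (M : PMSpace P) : TopologicalSpace P :=
  TopologicalSpace.generateFrom {U | ∃ p : P, ∃ t : ℝ, 0 < t ∧ U = M.Nbhd p t}

theorem stmt6 {S P : Type*} (M : PMSpace P) (I K : Set (Set S))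
    (hI : IsIdeal I) (hK : IsIdeal K) (f : S → P) (p : P) :
    StrongIKConv M I K f p ↔ StrongIKConv M (IdealJoin I K) K f p := by
  constructor
  · rintro ⟨A, hA, hconv⟩
    exact ⟨A, ⟨Aᶜ, hA, ∅, hK.1, by simp⟩, hconv⟩
  · rintro ⟨A, ⟨B, hB, C, hC, hBC⟩, hconv⟩
    refine ⟨Bᶜ, by simpa using hB, ?_⟩
    intro t ht
    refine hK.2.1 _ (hK.2.2 _ (hconv t ht) _ hC) _ ?_
    intro s hs
    simp only [Set.mem_setOf_eq] at hs ⊢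
    by_cases hsB : s ∈ Bᶜ
    · by_cases hsA : s ∈ A
      · left
        simpa [hsA, hsB] using hs
      · right
        have : s ∈ B ∪ C := by rw [← hBC]; exact hsA
        rcases this with h | h
        · exact absurd h hsB
        · exact h
    · exfalso
      apply hs
      simp only [if_neg hsB]
      have := M.self_one p t ht
      simp [PMSpace.Nbhd, this]
      linarith
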